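/- Proposition 1, first case. Let M, N be positive integers and let μ, ν be integers with 1 ≤ μ ≤ M and M+1 ≤ ν ≤ M+N. Write Q = Π_{j=μ}^{M−1} (q w_j − w_{j+1}')(w_j' − q w_{j+1}) · Π_{j=M}^{ν−2} (w_j − q w_{j+1}')(q w_j' − w_{j+1}). Then, with respect to the pairs (w_μ, w_μ'), …, (w_{ν−1}, w_{ν−1}') carrying the U_q(ŝl(M|N)) exchange factors, and with w_{μ−1}, w_ν further free variables, the weak equality (q w_μ − w_{μ−1}) · Q · (w_ν − q w_{ν−1}') ∼ −(w_μ' − q w_{μ−1}) · Q · (q w_ν − w_{ν−1}) holds. -/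

import Mathlib

/-- Bosonic exchange factor `H^b(u,v) = -(q²v - u)/(q²u - v)`. -/
noncomputable def Hb (q u v : ℂ) : ℂ := -(q ^ 2 * v - u) / (q ^ 2 * u - v)

/-- Fermionic exchange factor `H^f(u,v) = -(q²u - v)/(q²v - u)`. -/
noncomputable def Hf (q u v : ℂ) : ℂ := -(q ^ 2 * u - v) / (q ^ 2 * v - u)

/-- Exchange factor assignment for `U_q(sl^(M|N))`: bosonic for `j < M`,
the constant `-1` for `j = M`, fermionic for `j > M`. -/
noncomputable def Hex (M : ℕ) (q : ℂ) (j : ℕ) : ℂ → ℂ → ℂ :=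
  if j < M then Hb q else if j = M then fun _ _ => -1 else Hf q

/-- Interchange `w_j` and `w_j'` for every `j ∈ σ`. -/
def swapOn (σ : Finset ℕ) (w w' : ℕ → ℂ) : ℕ → ℂ := fun j => if j ∈ σ then w' j else w j

/-- Weak equality `F ∼ G` with respect to the pairs `(w_j, w_j')`, `j ∈ J`,
carrying exchange factors `H j`. -/
def WeakEq (J : Finset ℕ) (H : ℕ → ℂ → ℂ → ℂ) (w w' : ℕ → ℂ)
    (F G : (ℕ → ℂ) → (ℕ → ℂ) → ℂ) : Prop :=
  ∑ σ ∈ J.powerset, (∏ j ∈ σ, H j (w' j) (w j)) * F (swapOn σ w w') (swapOn σ w' w)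
    = ∑ σ ∈ J.powerset, (∏ j ∈ σ, H j (w' j) (w j)) * G (swapOn σ w w') (swapOn σ w' w)

/-- `Q = Π_{j=μ}^{M−1} (q w_j − w_{j+1}')(w_j' − q w_{j+1}) ·
Π_{j=M}^{ν−2} (w_j − q w_{j+1}')(q w_j' − w_{j+1})`. -/
noncomputable def Qprod (q : ℂ) (M μ ν : ℕ) (u u' : ℕ → ℂ) : ℂ :=
  (∏ j ∈ Finset.Ico μ M, (q * u j - u' (j + 1)) * (u' j - q * u (j + 1))) *
    ∏ j ∈ Finset.Ico M (ν - 1), (u j - q * u' (j + 1)) * (q * u' j - u (j + 1))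

namespace Prop1Aux
open Finset

variable (M : ℕ) (q : ℂ) (w w' : ℕ → ℂ) (μ : ℕ)

noncomputable def dwt (j : ℕ) : ℂ :=
  if j < M then q ^ 2 * w' j - w j else if j = M then 1 else q ^ 2 * w j - w' j

noncomputable def nwt (j : ℕ) : ℂ :=
  if j < M then w' j - q ^ 2 * w j else if j = M then -1 else w j - q ^ 2 * w' j

noncomputable def lnk (τ : Finset ℕ) (j : ℕ) : ℂ :=
  if j < M then
    (q * swapOn τ w w' j - swapOn τ w' w (j + 1)) * (swapOn τ w' w j - q * swapOn τ w w' (j + 1))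
  else
    (swapOn τ w w' j - q * swapOn τ w' w (j + 1)) * (q * swapOn τ w' w j - swapOn τ w w' (j + 1))

noncomputable def termF (k : ℕ) (τ : Finset ℕ) : ℂ :=
  (∏ j ∈ Finset.Ico μ (k + 1), if j ∈ τ then nwt M q w w' j else dwt M q w w' j) *
    ((q * swapOn τ w w' μ - w (μ - 1)) * ∏ j ∈ Finset.Ico μ k, lnk M q w w' τ j)

noncomputable def termG (k : ℕ) (τ : Finset ℕ) : ℂ :=
  (∏ j ∈ Finset.Ico μ (k + 1), if j ∈ τ then nwt M q w w' j else dwt M q w w' j) *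
    ((swapOn τ w' w μ - q * w (μ - 1)) * ∏ j ∈ Finset.Ico μ k, lnk M q w w' τ j)

def ins (e : Bool) (x : ℕ) (s : Finset ℕ) : Finset ℕ := if e then insert x s else s

@[simp] lemma ins_false (x : ℕ) (s : Finset ℕ) : ins false x s = s := rfl
@[simp] lemma ins_true (x : ℕ) (s : Finset ℕ) : ins true x s = insert x s := rfl

lemma mem_ins {e : Bool} {x j : ℕ} {s : Finset ℕ} :
    j ∈ ins e x s ↔ (e = true ∧ j = x) ∨ j ∈ s := by
  cases e <;> simp [ins]

noncomputable def BF (k : ℕ) (e : Bool) : ℂ :=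
  ∑ σ ∈ (Finset.Ico μ k).powerset, termF M q w w' μ k (ins e k σ)

noncomputable def BG (k : ℕ) (e : Bool) : ℂ :=
  ∑ σ ∈ (Finset.Ico μ k).powerset, termG M q w w' μ k (ins e k σ)

noncomputable def uE (e : Bool) (k : ℕ) : ℂ := if e then w' k else w k
noncomputable def vE (e : Bool) (k : ℕ) : ℂ := if e then w k else w' k

noncomputable def Tv (k : ℕ) (e f : Bool) : ℂ :=
  (if k < M then
      (q * uE w w' e k - vE w w' f (k + 1)) * (vE w w' e k - q * uE w w' f (k + 1))
    else
      (uE w w' e k - q * vE w w' f (k + 1)) * (q * vE w w' e k - uE w w' f (k + 1))) *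
  (if f then nwt M q w w' (k + 1) else dwt M q w w' (k + 1))

lemma swapOn_eq {τ τ' : Finset ℕ} {j : ℕ} (h : j ∈ τ ↔ j ∈ τ') :
    swapOn τ w w' j = swapOn τ' w w' j := by
  simp only [swapOn]
  by_cases hj : j ∈ τ
  · rw [if_pos hj, if_pos (h.mp hj)]
  · rw [if_neg hj, if_neg fun c => hj (h.mpr c)]

lemma swapOn_of_mem_iff {τ : Finset ℕ} {j : ℕ} {e : Bool} (h : j ∈ τ ↔ e = true) :
    swapOn τ w w' j = uE w w' e j := by
  cases e
  · simp only [swapOn, uE, Bool.false_eq_true, if_false]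
    rw [if_neg (by simp [h])]
  · simp only [swapOn, uE, if_pos (h.mpr rfl), if_true]

lemma swapOn_of_mem_iff' {τ : Finset ℕ} {j : ℕ} {e : Bool} (h : j ∈ τ ↔ e = true) :
    swapOn τ w' w j = vE w w' e j := by
  cases e
  · simp only [swapOn, vE, Bool.false_eq_true, if_false]
    rw [if_neg (by simp [h])]
  · simp only [swapOn, vE, if_pos (h.mpr rfl), if_true]

lemma lnk_congr {τ τ' : Finset ℕ} {j : ℕ} (h1 : j ∈ τ ↔ j ∈ τ') (h2 : j + 1 ∈ τ ↔ j + 1 ∈ τ') :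
    lnk M q w w' τ j = lnk M q w w' τ' j := by
  unfold lnk
  rw [swapOn_eq w w' h1, swapOn_eq w' w h1, swapOn_eq w w' h2, swapOn_eq w' w h2]

lemma key_mems {k : ℕ} {σ : Finset ℕ} (hσ : σ ⊆ Finset.Ico μ k) (e f : Bool) :
    (∀ j, j < k + 1 → (j ∈ ins f (k + 1) (ins e k σ) ↔ j ∈ ins e k σ)) ∧
      (k ∈ ins e k σ ↔ e = true) ∧ (k + 1 ∈ ins f (k + 1) (ins e k σ) ↔ f = true) := by
  have hσk : ∀ j ∈ σ, j < k := fun j hj => (Finset.mem_Ico.mp (hσ hj)).2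
  refine ⟨fun j hj => ?_, ?_, ?_⟩
  · rw [mem_ins]
    constructor
    · rintro (⟨-, rfl⟩ | h)
      · omega
      · exact h
    · exact Or.inr
  · rw [mem_ins]
    constructor
    · rintro (⟨he, -⟩ | h)
      · exact he
      · exact absurd (hσk _ h) (lt_irrefl k)
    · exact fun he => Or.inl ⟨he, rfl⟩
  · rw [mem_ins]
    constructor
    · rintro (⟨he, -⟩ | h)
      · exact he
      · rw [mem_ins] at h
        rcases h with ⟨-, h⟩ | h
        · omega
        · exact absurd (hσk _ h) (by omega)
    · exact fun he => Or.inl ⟨he, rfl⟩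

lemma termF_succ {k : ℕ} (hμk : μ ≤ k) {σ : Finset ℕ} (hσ : σ ⊆ Finset.Ico μ k)
    (e f : Bool) :
    termF M q w w' μ (k + 1) (ins f (k + 1) (ins e k σ)) =
      termF M q w w' μ k (ins e k σ) * Tv M q w w' k e f := by
  obtain ⟨h1, h2, h3⟩ := key_mems μ hσ e f
  set τ := ins e k σ with hτ
  set τ' := ins f (k + 1) τ with hτ'
  have h2' : k ∈ τ' ↔ e = true := (h1 k (by omega)).trans h2
  have hw : (∏ j ∈ Finset.Ico μ (k + 1 + 1),
      if j ∈ τ' then nwt M q w w' j else dwt M q w w' j) =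
      (∏ j ∈ Finset.Ico μ (k + 1), if j ∈ τ then nwt M q w w' j else dwt M q w w' j) *
        (if f then nwt M q w w' (k + 1) else dwt M q w w' (k + 1)) := by
    rw [Finset.prod_Ico_succ_top (by omega)]
    congr 1
    · exact Finset.prod_congr rfl fun j hj => by
        simp only [h1 j (Finset.mem_Ico.mp hj).2]
    · cases f
      · rw [if_neg (by simp [h3]), if_neg (by simp)]
      · rw [if_pos (h3.mpr rfl), if_pos rfl]
  have hl : (∏ j ∈ Finset.Ico μ (k + 1), lnk M q w w' τ' j) =
      (∏ j ∈ Finset.Ico μ k, lnk M q w w' τ j) *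
        ((if k < M then
            (q * uE w w' e k - vE w w' f (k + 1)) * (vE w w' e k - q * uE w w' f (k + 1))
          else
            (uE w w' e k - q * vE w w' f (k + 1)) * (q * vE w w' e k - uE w w' f (k + 1)))) := by
    rw [Finset.prod_Ico_succ_top hμk]
    congr 1
    · exact Finset.prod_congr rfl fun j hj => by
        have hjk : j < k := (Finset.mem_Ico.mp hj).2
        exact (lnk_congr M q w w' (h1 j (by omega)).symm (h1 (j + 1) (by omega)).symm).symm
    · unfold lnk
      rw [swapOn_of_mem_iff w w' h2', swapOn_of_mem_iff' w w' h2',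
        swapOn_of_mem_iff w w' h3, swapOn_of_mem_iff' w w' h3]
  have hb : swapOn τ' w w' μ = swapOn τ w w' μ :=
    swapOn_eq w w' (h1 μ (by omega))
  unfold termF Tv
  rw [hw, hl, hb]
  ring

lemma termG_succ {k : ℕ} (hμk : μ ≤ k) {σ : Finset ℕ} (hσ : σ ⊆ Finset.Ico μ k)
    (e f : Bool) :
    termG M q w w' μ (k + 1) (ins f (k + 1) (ins e k σ)) =
      termG M q w w' μ k (ins e k σ) * Tv M q w w' k e f := by
  obtain ⟨h1, h2, h3⟩ := key_mems μ hσ e f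
  set τ := ins e k σ with hτ
  set τ' := ins f (k + 1) τ with hτ'
  have h2' : k ∈ τ' ↔ e = true := (h1 k (by omega)).trans h2
  have hw : (∏ j ∈ Finset.Ico μ (k + 1 + 1),
      if j ∈ τ' then nwt M q w w' j else dwt M q w w' j) =
      (∏ j ∈ Finset.Ico μ (k + 1), if j ∈ τ then nwt M q w w' j else dwt M q w w' j) *
        (if f then nwt M q w w' (k + 1) else dwt M q w w' (k + 1)) := by
    rw [Finset.prod_Ico_succ_top (by omega)]
    congr 1
    · exact Finset.prod_congr rfl fun j hj => by
        simp only [h1 j (Finset.mem_Ico.mp hj).2]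
    · cases f
      · rw [if_neg (by simp [h3]), if_neg (by simp)]
      · rw [if_pos (h3.mpr rfl), if_pos rfl]
  have hl : (∏ j ∈ Finset.Ico μ (k + 1), lnk M q w w' τ' j) =
      (∏ j ∈ Finset.Ico μ k, lnk M q w w' τ j) *
        ((if k < M then
            (q * uE w w' e k - vE w w' f (k + 1)) * (vE w w' e k - q * uE w w' f (k + 1))
          else
            (uE w w' e k - q * vE w w' f (k + 1)) * (q * vE w w' e k - uE w w' f (k + 1)))) := by
    rw [Finset.prod_Ico_succ_top hμk]
    congr 1
    · exact Finset.prod_congr rfl fun j hj => by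
        have hjk : j < k := (Finset.mem_Ico.mp hj).2
        exact (lnk_congr M q w w' (h1 j (by omega)).symm (h1 (j + 1) (by omega)).symm).symm
    · unfold lnk
      rw [swapOn_of_mem_iff w w' h2', swapOn_of_mem_iff' w w' h2',
        swapOn_of_mem_iff w w' h3, swapOn_of_mem_iff' w w' h3]
  have hb : swapOn τ' w' w μ = swapOn τ w' w μ :=
    swapOn_eq w' w (h1 μ (by omega))
  unfold termG Tv
  rw [hw, hl, hb]
  ring

lemma BF_succ {k : ℕ} (hμk : μ ≤ k) (f : Bool) :
    BF M q w w' μ (k + 1) f =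
      BF M q w w' μ k false * Tv M q w w' k false f +
        BF M q w w' μ k true * Tv M q w w' k true f := by
  unfold BF
  rw [Nat.Ico_succ_right_eq_insert_Ico hμk,
    Finset.sum_powerset_insert (by simp)]
  rw [Finset.sum_mul, Finset.sum_mul]
  congr 1
  · refine Finset.sum_congr rfl fun σ hσ => ?_
    have := termF_succ M q w w' μ hμk (Finset.mem_powerset.mp hσ) false f
    simpa using this
  · refine Finset.sum_congr rfl fun σ hσ => ?_
    have := termF_succ M q w w' μ hμk (Finset.mem_powerset.mp hσ) true f
    simpa using this

lemma BG_succ {k : ℕ} (hμk : μ ≤ k) (f : Bool) :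
    BG M q w w' μ (k + 1) f =
      BG M q w w' μ k false * Tv M q w w' k false f +
        BG M q w w' μ k true * Tv M q w w' k true f := by
  unfold BG
  rw [Nat.Ico_succ_right_eq_insert_Ico hμk,
    Finset.sum_powerset_insert (by simp)]
  rw [Finset.sum_mul, Finset.sum_mul]
  congr 1
  · refine Finset.sum_congr rfl fun σ hσ => ?_
    have := termG_succ M q w w' μ hμk (Finset.mem_powerset.mp hσ) false f
    simpa using this
  · refine Finset.sum_congr rfl fun σ hσ => ?_
    have := termG_succ M q w w' μ hμk (Finset.mem_powerset.mp hσ) true f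
    simpa using this

lemma BF_base_false : BF M q w w' μ μ false = dwt M q w w' μ * (q * w μ - w (μ - 1)) := by
  unfold BF termF
  simp [Finset.Ico_self, Nat.Ico_succ_singleton, swapOn]

lemma BF_base_true : BF M q w w' μ μ true = nwt M q w w' μ * (q * w' μ - w (μ - 1)) := by
  unfold BF termF
  simp [Finset.Ico_self, Nat.Ico_succ_singleton, swapOn]

lemma BG_base_false : BG M q w w' μ μ false = dwt M q w w' μ * (w' μ - q * w (μ - 1)) := by
  unfold BG termG
  simp [Finset.Ico_self, Nat.Ico_succ_singleton, swapOn]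

lemma BG_base_true : BG M q w w' μ μ true = nwt M q w w' μ * (w μ - q * w (μ - 1)) := by
  unfold BG termG
  simp [Finset.Ico_self, Nat.Ico_succ_singleton, swapOn]

lemma invariant (hμM : μ ≤ M) :
    ∀ k, μ ≤ k →
      ((k < M →
          q * BF M q w w' μ k false + q * BF M q w w' μ k true
              - BG M q w w' μ k false - BG M q w w' μ k true = 0 ∧
            w' k * BF M q w w' μ k false + w k * BF M q w w' μ k true
              - q * w k * BG M q w w' μ k false - q * w' k * BG M q w w' μ k true = 0) ∧
        (M ≤ k →
          BF M q w w' μ k false + BF M q w w' μ k true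
              + q * BG M q w w' μ k false + q * BG M q w w' μ k true = 0 ∧
            q * w' k * BF M q w w' μ k false + q * w k * BF M q w w' μ k true
              + w k * BG M q w w' μ k false + w' k * BG M q w w' μ k true = 0)) := by
  intro k hk
  induction k, hk using Nat.le_induction with
  | base =>
    rw [BF_base_false, BF_base_true, BG_base_false, BG_base_true]
    constructor
    · intro hlt
      unfold nwt dwt
      rw [if_pos hlt, if_pos hlt]
      constructor <;> ring
    · intro hge
      have hMeq : μ = M := le_antisymm hμM hge
      unfold nwt dwt
      rw [if_neg (by omega), if_pos hMeq, if_neg (by omega), if_pos hMeq]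
      constructor <;> ring
  | succ k hk ih =>
    rw [BF_succ M q w w' μ hk, BF_succ M q w w' μ hk,
      BG_succ M q w w' μ hk, BG_succ M q w w' μ hk]
    constructor
    · intro hlt1
      have hkM : k < M := by omega
      obtain ⟨h3, h4⟩ := ih.1 hkM
      simp only [Tv, uE, vE, nwt, dwt, if_pos hkM, if_pos hlt1, Bool.false_eq_true, if_false,
        if_true]
      constructor
      · linear_combination ((-q*(w k)*(w (k+1))*(w' k) + q*(w k)*(w' k)*(w' (k+1)) + q*(w (k+1))*(w' (k+1))^2 - q*(w (k+1))^2*(w' (k+1)) + q^2*(w k)*(w (k+1))^2 - q^2*(w k)*(w' (k+1))^2 + q^2*(w (k+1))^2*(w' k) - q^2*(w' k)*(w' (k+1))^2 - q^3*(w k)*(w (k+1))*(w' k) + q^3*(w k)*(w' k)*(w' (k+1)) + q^3*(w (k+1))*(w' (k+1))^2 - q^3*(w (k+1))^2*(w' (k+1)))) * h3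
      · linear_combination ((-q*(w k)*(w (k+1))*(w' (k+1))^2 + q*(w k)*(w (k+1))^2*(w' (k+1)) - q*(w (k+1))*(w' k)*(w' (k+1))^2 + q*(w (k+1))^2*(w' k)*(w' (k+1)) - q^2*(w k)*(w (k+1))^2*(w' k) + q^2*(w k)*(w' k)*(w' (k+1))^2 + q^2*(w (k+1))*(w' (k+1))^3 - q^2*(w (k+1))^3*(w' (k+1)) - q^3*(w k)*(w (k+1))*(w' (k+1))^2 + q^3*(w k)*(w (k+1))^2*(w' (k+1)) - q^3*(w (k+1))*(w' k)*(w' (k+1))^2 + q^3*(w (k+1))^2*(w' k)*(w' (k+1)))) * h3 + ((q^2*(w (k+1))*(w' (k+1))^2 - q^2*(w (k+1))^2*(w' (k+1)) + q^2*(w (k+1))^3 - q^2*(w' (k+1))^3 + q^4*(w (k+1))*(w' (k+1))^2 - q^4*(w (k+1))^2*(w' (k+1)) + (w (k+1))*(w' (k+1))^2 - (w (k+1))^2*(w' (k+1)))) * h4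
    · intro hge1
      by_cases hkM : k < M
      · have hM1 : k + 1 = M := by omega
        obtain ⟨h3, h4⟩ := ih.1 hkM
        simp only [Tv, uE, vE, nwt, dwt, if_pos hkM, if_neg (show ¬ k + 1 < M by omega),
          if_pos hM1, Bool.false_eq_true, if_false, if_true]
        constructor
        · linear_combination ((-q*(w k)*(w (k+1)) + q*(w k)*(w' (k+1)) - q*(w (k+1))*(w' k) + q*(w' k)*(w' (k+1)))) * h3 + ((q^2*(w (k+1)) - q^2*(w' (k+1)) + (w (k+1)) - (w' (k+1)))) * h4
        · linear_combination ((-q*(w k)*(w (k+1))*(w' k) + q*(w k)*(w' k)*(w' (k+1)) + q*(w (k+1))*(w' (k+1))^2 - q*(w (k+1))^2*(w' (k+1)))) * h3 + ((q*(w (k+1))^2 - q*(w' (k+1))^2)) * h4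
      · obtain ⟨h3, h4⟩ := ih.2 (by omega)
        simp only [Tv, uE, vE, nwt, dwt, if_neg hkM, if_neg (show ¬ k + 1 < M by omega),
          if_neg (show ¬ k + 1 = M by omega), Bool.false_eq_true, if_false, if_true]
        constructor
        · linear_combination ((q*(w k)*(w (k+1))*(w' k) - q*(w k)*(w' k)*(w' (k+1)) - q*(w (k+1))*(w' (k+1))^2 + q*(w (k+1))^2*(w' (k+1)) - q^2*(w k)*(w (k+1))^2 + q^2*(w k)*(w' (k+1))^2 - q^2*(w (k+1))^2*(w' k) + q^2*(w' k)*(w' (k+1))^2 + q^3*(w k)*(w (k+1))*(w' k) - q^3*(w k)*(w' k)*(w' (k+1)) - q^3*(w (k+1))*(w' (k+1))^2 + q^3*(w (k+1))^2*(w' (k+1)))) * h3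
        · linear_combination ((q*(w k)*(w (k+1))*(w' (k+1))^2 - q*(w k)*(w (k+1))^2*(w' (k+1)) + q*(w (k+1))*(w' k)*(w' (k+1))^2 - q*(w (k+1))^2*(w' k)*(w' (k+1)) + q^2*(w k)*(w (k+1))^2*(w' k) - q^2*(w k)*(w' k)*(w' (k+1))^2 - q^2*(w (k+1))*(w' (k+1))^3 + q^2*(w (k+1))^3*(w' (k+1)) + q^3*(w k)*(w (k+1))*(w' (k+1))^2 - q^3*(w k)*(w (k+1))^2*(w' (k+1)) + q^3*(w (k+1))*(w' k)*(w' (k+1))^2 - q^3*(w (k+1))^2*(w' k)*(w' (k+1)))) * h3 + ((-q^2*(w (k+1))*(w' (k+1))^2 + q^2*(w (k+1))^2*(w' (k+1)) - q^2*(w (k+1))^3 + q^2*(w' (k+1))^3 - q^4*(w (k+1))*(w' (k+1))^2 + q^4*(w (k+1))^2*(w' (k+1)) - (w (k+1))*(w' (k+1))^2 + (w (k+1))^2*(w' (k+1)))) * h4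


lemma hex_mul_dwt (M : ℕ) (q : ℂ) (w w' : ℕ → ℂ) {j : ℕ} (hj : dwt M q w w' j ≠ 0) :
    Hex M q j (w' j) (w j) * dwt M q w w' j = nwt M q w w' j := by
  by_cases h1 : j < M
  · simp only [Hex, dwt, nwt, if_pos h1] at hj ⊢
    unfold Hb
    rw [div_mul_cancel₀ _ hj]
    ring
  · by_cases h2 : j = M
    · simp only [Hex, dwt, nwt, if_neg h1, if_pos h2]
      norm_num
    · simp only [Hex, dwt, nwt, if_neg h1, if_neg h2] at hj ⊢
      unfold Hf
      rw [div_mul_cancel₀ _ hj]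
      ring

lemma weight_split (M ν : ℕ) (q : ℂ) (w w' : ℕ → ℂ) {σ : Finset ℕ}
    (hσ : σ ⊆ Finset.Ico μ ν) (hd : ∀ j ∈ Finset.Ico μ ν, dwt M q w w' j ≠ 0) :
    (∏ j ∈ σ, Hex M q j (w' j) (w j)) * ∏ j ∈ Finset.Ico μ ν, dwt M q w w' j =
      ∏ j ∈ Finset.Ico μ ν, (if j ∈ σ then nwt M q w w' j else dwt M q w w' j) := by
  rw [← Finset.prod_sdiff hσ, ← Finset.prod_sdiff hσ (f := fun j =>
    if j ∈ σ then nwt M q w w' j else dwt M q w w' j)]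
  have h1 : ∏ j ∈ Finset.Ico μ ν \ σ,
      (if j ∈ σ then nwt M q w w' j else dwt M q w w' j) =
      ∏ j ∈ Finset.Ico μ ν \ σ, dwt M q w w' j :=
    Finset.prod_congr rfl fun j hj => if_neg (Finset.mem_sdiff.mp hj).2
  have h2 : ∏ j ∈ σ, (if j ∈ σ then nwt M q w w' j else dwt M q w w' j) =
      ∏ j ∈ σ, nwt M q w w' j :=
    Finset.prod_congr rfl fun j hj => if_pos hj
  rw [h1, h2]
  have h3 : (∏ j ∈ σ, Hex M q j (w' j) (w j)) * ∏ j ∈ σ, dwt M q w w' j =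
      ∏ j ∈ σ, nwt M q w w' j := by
    rw [← Finset.prod_mul_distrib]
    exact Finset.prod_congr rfl fun j hj => hex_mul_dwt M q w w' (hd j (hσ hj))
  calc (∏ j ∈ σ, Hex M q j (w' j) (w j)) *
        ((∏ j ∈ Finset.Ico μ ν \ σ, dwt M q w w' j) * ∏ j ∈ σ, dwt M q w w' j)
      = (∏ j ∈ Finset.Ico μ ν \ σ, dwt M q w w' j) *
        ((∏ j ∈ σ, Hex M q j (w' j) (w j)) * ∏ j ∈ σ, dwt M q w w' j) := by ring
    _ = _ := by rw [h3]

lemma swapOn_not_mem {σ : Finset ℕ} {j : ℕ} (w w' : ℕ → ℂ) (h : j ∉ σ) :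
    swapOn σ w w' j = w j := if_neg h

lemma swapOn_mem {σ : Finset ℕ} {j : ℕ} (w w' : ℕ → ℂ) (h : j ∈ σ) :
    swapOn σ w w' j = w' j := if_pos h

lemma Qprod_eq (M μ ν : ℕ) (q : ℂ) (w w' : ℕ → ℂ) (σ : Finset ℕ)
    (hμM : μ ≤ M) (hMν : M ≤ ν - 1) :
    Qprod q M μ ν (swapOn σ w w') (swapOn σ w' w) =
      ∏ j ∈ Finset.Ico μ (ν - 1), lnk M q w w' σ j := by
  unfold Qprod
  rw [← Finset.prod_Ico_consecutive (lnk M q w w' σ) hμM hMν]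
  congr 1
  · exact Finset.prod_congr rfl fun j hj =>
      (if_pos (Finset.mem_Ico.mp hj).2).symm
  · exact Finset.prod_congr rfl fun j hj =>
      (if_neg (by have := (Finset.mem_Ico.mp hj).1; omega)).symm

end Prop1Aux

/-- Proposition 1, first case: for `1 ≤ μ ≤ M` and `M+1 ≤ ν ≤ M+N`,
`(q w_μ − w_{μ−1}) Q (w_ν − q w_{ν−1}') ∼ −(w_μ' − q w_{μ−1}) Q (q w_ν − w_{ν−1})`
with respect to the pairs `(w_μ, w_μ'), …, (w_{ν−1}, w_{ν−1}')`. -/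
theorem proposition1_first (M N : ℕ) (hM : 1 ≤ M) (hN : 1 ≤ N)
    (μ ν : ℕ) (hμ1 : 1 ≤ μ) (hμ2 : μ ≤ M) (hν1 : M + 1 ≤ ν) (hν2 : ν ≤ M + N)
    (q : ℂ) (hq : q ≠ 0) (hq2 : q ^ 2 ≠ 1) (w w' : ℕ → ℂ)
    (hden : ∀ j ∈ Finset.Ico μ ν,
      (j < M → q ^ 2 * w' j ≠ w j) ∧ (M < j → q ^ 2 * w j ≠ w' j)) :
    WeakEq (Finset.Ico μ ν) (Hex M q) w w'
      (fun u u' => (q * u μ - u (μ - 1)) * Qprod q M μ ν u u' * (u ν - q * u' (ν - 1)))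
      (fun u u' =>
        -((u' μ - q * u (μ - 1)) * Qprod q M μ ν u u' * (q * u ν - u (ν - 1)))) :=
  by
  classical
  have hμM : μ ≤ M := hμ2
  have hMν : M ≤ ν - 1 := by omega
  have hν : ν - 1 + 1 = ν := by omega
  have hμν1 : μ ≤ ν - 1 := by omega
  have hd : ∀ j ∈ Finset.Ico μ ν, Prop1Aux.dwt M q w w' j ≠ 0 := by
    intro j hj
    obtain ⟨hj1, hj2⟩ := hden j hj
    unfold Prop1Aux.dwt
    by_cases h1 : j < M
    · rw [if_pos h1]
      exact sub_ne_zero_of_ne (hj1 h1)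
    · by_cases h2 : j = M
      · rw [if_neg h1, if_pos h2]
        exact one_ne_zero
      · rw [if_neg h1, if_neg h2]
        exact sub_ne_zero_of_ne (hj2 (by omega))
  have hD : (∏ j ∈ Finset.Ico μ ν, Prop1Aux.dwt M q w w' j) ≠ 0 :=
    Finset.prod_ne_zero_iff.mpr hd
  unfold WeakEq
  rw [← sub_eq_zero, ← Finset.sum_sub_distrib]
  have hmain : (∏ j ∈ Finset.Ico μ ν, Prop1Aux.dwt M q w w' j) *
      (∑ σ ∈ (Finset.Ico μ ν).powerset,
        ((∏ j ∈ σ, Hex M q j (w' j) (w j)) *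
            ((fun u u' => (q * u μ - u (μ - 1)) * Qprod q M μ ν u u' * (u ν - q * u' (ν - 1)))
              (swapOn σ w w') (swapOn σ w' w)) -
          (∏ j ∈ σ, Hex M q j (w' j) (w j)) *
            ((fun u u' =>
                -((u' μ - q * u (μ - 1)) * Qprod q M μ ν u u' * (q * u ν - u (ν - 1))))
              (swapOn σ w w') (swapOn σ w' w)))) = 0 := by
    rw [Finset.mul_sum]
    have hstep : ∀ σ ∈ (Finset.Ico μ ν).powerset,
        (∏ j ∈ Finset.Ico μ ν, Prop1Aux.dwt M q w w' j) *
          ((∏ j ∈ σ, Hex M q j (w' j) (w j)) *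
              ((fun u u' =>
                  (q * u μ - u (μ - 1)) * Qprod q M μ ν u u' * (u ν - q * u' (ν - 1)))
                (swapOn σ w w') (swapOn σ w' w)) -
            (∏ j ∈ σ, Hex M q j (w' j) (w j)) *
              ((fun u u' =>
                  -((u' μ - q * u (μ - 1)) * Qprod q M μ ν u u' * (q * u ν - u (ν - 1))))
                (swapOn σ w w') (swapOn σ w' w))) =
        Prop1Aux.termF M q w w' μ (ν - 1) σ * (w ν - q * swapOn σ w' w (ν - 1)) +
          Prop1Aux.termG M q w w' μ (ν - 1) σ * (q * w ν - swapOn σ w w' (ν - 1)) := by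
      intro σ hσ
      have hσ' : σ ⊆ Finset.Ico μ ν := Finset.mem_powerset.mp hσ
      have hμ1m : μ - 1 ∉ σ := fun c => by
        have := Finset.mem_Ico.mp (hσ' c); omega
      have hνm : ν ∉ σ := fun c => by
        have := Finset.mem_Ico.mp (hσ' c); omega
      simp only []
      rw [Prop1Aux.Qprod_eq M μ ν q w w' σ hμM hMν,
        Prop1Aux.swapOn_not_mem w w' hμ1m, Prop1Aux.swapOn_not_mem w w' hνm]
      unfold Prop1Aux.termF Prop1Aux.termG
      rw [hν]
      rw [← Prop1Aux.weight_split μ M ν q w w' hσ' hd]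
      ring
    rw [Finset.sum_congr rfl hstep]
    have hsplit : ∑ σ ∈ (Finset.Ico μ ν).powerset,
        (Prop1Aux.termF M q w w' μ (ν - 1) σ * (w ν - q * swapOn σ w' w (ν - 1)) +
          Prop1Aux.termG M q w w' μ (ν - 1) σ * (q * w ν - swapOn σ w w' (ν - 1))) =
        Prop1Aux.BF M q w w' μ (ν - 1) false * (w ν - q * w' (ν - 1)) +
          Prop1Aux.BF M q w w' μ (ν - 1) true * (w ν - q * w (ν - 1)) +
          Prop1Aux.BG M q w w' μ (ν - 1) false * (q * w ν - w (ν - 1)) +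
          Prop1Aux.BG M q w w' μ (ν - 1) true * (q * w ν - w' (ν - 1)) := by
      have hIco : Finset.Ico μ ν = insert (ν - 1) (Finset.Ico μ (ν - 1)) := by
        have h := Nat.Ico_succ_right_eq_insert_Ico (a := μ) (b := ν - 1) hμν1
        rwa [Nat.succ_eq_add_one, hν] at h
      have hne : (ν - 1) ∉ Finset.Ico μ (ν - 1) := by simp
      rw [hIco, Finset.sum_powerset_insert hne, Finset.sum_add_distrib, Finset.sum_add_distrib]
      have c1 : ∑ x ∈ (Finset.Ico μ (ν - 1)).powerset,
          Prop1Aux.termF M q w w' μ (ν - 1) x * (w ν - q * swapOn x w' w (ν - 1)) =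
          (∑ x ∈ (Finset.Ico μ (ν - 1)).powerset, Prop1Aux.termF M q w w' μ (ν - 1) x) *
            (w ν - q * w' (ν - 1)) := by
        rw [Finset.sum_mul]
        exact Finset.sum_congr rfl fun x hx => by
          rw [Prop1Aux.swapOn_not_mem w' w (fun c => hne (Finset.mem_powerset.mp hx c))]
      have c2 : ∑ x ∈ (Finset.Ico μ (ν - 1)).powerset,
          Prop1Aux.termG M q w w' μ (ν - 1) x * (q * w ν - swapOn x w w' (ν - 1)) =
          (∑ x ∈ (Finset.Ico μ (ν - 1)).powerset, Prop1Aux.termG M q w w' μ (ν - 1) x) *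
            (q * w ν - w (ν - 1)) := by
        rw [Finset.sum_mul]
        exact Finset.sum_congr rfl fun x hx => by
          rw [Prop1Aux.swapOn_not_mem w w' (fun c => hne (Finset.mem_powerset.mp hx c))]
      have c3 : ∑ x ∈ (Finset.Ico μ (ν - 1)).powerset,
          Prop1Aux.termF M q w w' μ (ν - 1) (insert (ν - 1) x) *
            (w ν - q * swapOn (insert (ν - 1) x) w' w (ν - 1)) =
          (∑ x ∈ (Finset.Ico μ (ν - 1)).powerset,
            Prop1Aux.termF M q w w' μ (ν - 1) (insert (ν - 1) x)) * (w ν - q * w (ν - 1)) := by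
        rw [Finset.sum_mul]
        exact Finset.sum_congr rfl fun x hx => by
          rw [Prop1Aux.swapOn_mem w' w (Finset.mem_insert_self _ _)]
      have c4 : ∑ x ∈ (Finset.Ico μ (ν - 1)).powerset,
          Prop1Aux.termG M q w w' μ (ν - 1) (insert (ν - 1) x) *
            (q * w ν - swapOn (insert (ν - 1) x) w w' (ν - 1)) =
          (∑ x ∈ (Finset.Ico μ (ν - 1)).powerset,
            Prop1Aux.termG M q w w' μ (ν - 1) (insert (ν - 1) x)) * (q * w ν - w' (ν - 1)) := by
        rw [Finset.sum_mul]
        exact Finset.sum_congr rfl fun x hx => by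
          rw [Prop1Aux.swapOn_mem w w' (Finset.mem_insert_self _ _)]
      rw [c1, c2, c3, c4]
      unfold Prop1Aux.BF Prop1Aux.BG
      simp only [Prop1Aux.ins_false, Prop1Aux.ins_true]
      ring
    rw [hsplit]
    obtain ⟨h3, h4⟩ := (Prop1Aux.invariant M q w w' μ hμM (ν - 1) hμν1).2 hMν
    linear_combination (w ν) * h3 - h4
  rcases mul_eq_zero.mp hmain with h | h
  · exact absurd h hD
  · exact h
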